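/- Let G = S∞ × S∞ × S∞ be the product of three copies of the finitary symmetric group of ℕ and let K[α] and Θ_j[β] be as defined. For all p, q ∈ G and all α, β, γ ∈ ℕ: (1) there exists N such that for every j ≥ N there are k₁ ∈ K[α], k₂ ∈ K[γ] with p·Θ_j[β]·q = k₁·(p·Θ_N[β]·q)·k₂ (the double cosets K[α]·(p·Θ_j[β]·q)·K[γ] are eventually constant); (2) for all k₁ ∈ K[α], h, h' ∈ K[β], k₂ ∈ K[γ] there exists N such that for every j ≥ N the elements (k₁·p·h)·Θ_j[β]·(h'·q·k₂) and p·Θ_j[β]·q lie in the same (K[α], K[γ])-double coset; hence the eventual double coset depends only on the double cosets of p and q. -/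

import Mathlib

open scoped InnerProductSpace

/-- The finitary symmetric group of a countable set: permutations with finite support. -/
def finitarySymm (Ω : Type*) : Subgroup (Equiv.Perm Ω) where
  carrier := {g | {x | g x ≠ x}.Finite}
  one_mem' := by simp
  mul_mem' := by
    intro a b ha hb
    refine Set.Finite.subset (ha.union hb) fun x hx => ?_
    simp only [Set.mem_setOf_eq, Equiv.Perm.mul_apply] at hx
    simp only [Set.mem_union, Set.mem_setOf_eq]
    by_cases h : b x = x
    · exact Or.inl (by simpa [h] using hx)
    · exact Or.inr h
  inv_mem' := by
    intro a ha
    refine Set.Finite.subset ha fun x hx => ?_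
    simp only [Set.mem_setOf_eq] at hx ⊢
    intro h
    apply hx
    nth_rewrite 1 [← h]
    exact Equiv.symm_apply_apply a x

/-- `S∞`, the finitary symmetric group of `ℕ`. -/
abbrev SInf := ↥(finitarySymm ℕ)

/-- The group `G = S∞ × S∞ × S∞`. -/
abbrev TriG := SInf × SInf × SInf

/-- Membership in the subgroup `K[α] ⊆ G`: diagonal triples `(r, r, r)` with `r ∈ S∞`
fixing every `x < α`. -/
def InKtri (α : ℕ) (k : TriG) : Prop :=
  ∃ r : SInf, (∀ x < α, (r : Equiv.Perm ℕ) x = x) ∧ k = (r, r, r)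

/-- The permutation exchanging the blocks `[β, β+j)` and `[β+j, β+2j)`. -/
def thetaFun (β j : ℕ) (x : ℕ) : ℕ :=
  if β ≤ x ∧ x < β + j then x + j
  else if β + j ≤ x ∧ x < β + 2 * j then x - j
  else x

lemma thetaFun_involutive (β j : ℕ) : Function.Involutive (thetaFun β j) := by
  intro x
  unfold thetaFun
  split_ifs <;> omega

/-- `θ_j[β]` as a permutation of `ℕ`. -/
def thetaPerm (β j : ℕ) : Equiv.Perm ℕ :=
  Function.Involutive.toPerm _ (thetaFun_involutive β j)

lemma thetaPerm_finitary (β j : ℕ) : thetaPerm β j ∈ finitarySymm ℕ := by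
  refine Set.Finite.subset (Set.finite_Iio (β + 2 * j)) fun x hx => ?_
  simp only [Set.mem_setOf_eq, thetaPerm, Function.Involutive.coe_toPerm, thetaFun] at hx
  simp only [Set.mem_Iio]
  by_contra h
  apply hx
  split_ifs <;> omega

/-- `θ_j[β]` as an element of `S∞`. -/
def thetaEl (β j : ℕ) : SInf := ⟨thetaPerm β j, thetaPerm_finitary β j⟩

/-- `Θ_j[β] = (θ_j[β], θ_j[β], θ_j[β])` as an element of `G = S∞ × S∞ × S∞`. -/
def ThetaTri (β j : ℕ) : TriG := (thetaEl β j, thetaEl β j, thetaEl β j)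

/-- Two elements of `G` lie in the same `(K[α], K[γ])`-double coset. -/
def SameDC (α γ : ℕ) (u v : TriG) : Prop :=
  ∃ k₁ k₂ : TriG, InKtri α k₁ ∧ InKtri γ k₂ ∧ u = k₁ * v * k₂

/-- **Lemma 3.1 (correctness of the double coset product for
`G = S∞ × S∞ × S∞`, `K = diag S∞`)**: (1) the double cosets
`K[α]·(p·Θ_j[β]·q)·K[γ]` stabilize for large `j`; (2) the eventual double coset does
not depend on the choice of the representatives `p`, `q` of their double cosets. -/
-- helper lemmas
lemma thetaFun_low {β j x : ℕ} (h : x < β) : thetaFun β j x = x := by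
  unfold thetaFun; split_ifs <;> omega

lemma thetaFun_up {β j x : ℕ} (h1 : β ≤ x) (h2 : x < β + j) : thetaFun β j x = x + j := by
  unfold thetaFun; split_ifs <;> omega

lemma thetaFun_down {β j x : ℕ} (h1 : β + j ≤ x) (h2 : x < β + 2*j) : thetaFun β j x = x - j := by
  unfold thetaFun; split_ifs <;> omega

lemma thetaEl_apply (β j x : ℕ) : (↑(thetaEl β j) : Equiv.Perm ℕ) x = thetaFun β j x := rfl

lemma coe_mul_apply (a b : SInf) (x : ℕ) :
    (↑(a * b) : Equiv.Perm ℕ) x = (↑a : Equiv.Perm ℕ) ((↑b : Equiv.Perm ℕ) x) := rfl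

lemma thetaEl_sq (β j : ℕ) : thetaEl β j * thetaEl β j = 1 := by
  refine Subtype.ext (Equiv.ext fun x => ?_)
  have := thetaFun_involutive β j x
  simpa [coe_mul_apply, thetaEl_apply] using this

lemma supp_bound (r : SInf) : ∃ B : ℕ, ∀ x, B ≤ x → (↑r : Equiv.Perm ℕ) x = x := by
  obtain ⟨b, hb⟩ := r.2.bddAbove
  refine ⟨b + 1, fun x hx => ?_⟩
  by_contra h
  have : x ∈ {x | (↑r : Equiv.Perm ℕ) x ≠ x} := h
  have := hb this
  omega

lemma commute_of (n : ℕ) (a u : SInf) (ha : ∀ x, x < n → (↑a : Equiv.Perm ℕ) x = x)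
    (hu : ∀ x, n ≤ x → (↑u : Equiv.Perm ℕ) x = x) : a * u = u * a := by
  have hd : (↑a : Equiv.Perm ℕ).Disjoint ↑u := fun x =>
    (lt_or_ge x n).elim (fun h => Or.inl (ha x h)) (fun h => Or.inr (hu x h))
  exact Subtype.ext hd.commute.eq
/-- Conjugating a permutation supported in `[β, β+j)` by `θ_j[β]` yields a permutation
fixing everything below `β + j`. -/
lemma conj_fix (β j : ℕ) (r : SInf) (hlow : ∀ x, x < β → (↑r : Equiv.Perm ℕ) x = x)
    (hhigh : ∀ x, β + j ≤ x → (↑r : Equiv.Perm ℕ) x = x) :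
    ∀ x, x < β + j → (↑(thetaEl β j * r * thetaEl β j) : Equiv.Perm ℕ) x = x := by
  intro x hx
  simp only [coe_mul_apply, thetaEl_apply]
  rcases lt_or_ge x β with h | h
  · rw [thetaFun_low h, hlow x h, thetaFun_low h]
  · rw [thetaFun_up h hx, hhigh (x + j) (by omega), thetaFun_down (by omega) (by omega)]
    omega

/-- Decomposition: `θ_{s+m}[β] = a * θ_s[β] * b` with `a`, `b` fixing `[0, β+s)`. -/
lemma theta_decomp (β s m : ℕ) (hsm : s ≤ m) :
    (∀ x, x < β + s → (↑(thetaEl (β + s) m) : Equiv.Perm ℕ) x = x) ∧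
    (∀ x, x < β + s →
      (↑(thetaEl β s * thetaEl (β + s) m * thetaEl β (s + m)) : Equiv.Perm ℕ) x = x) ∧
    thetaEl (β + s) m * thetaEl β s *
      (thetaEl β s * thetaEl (β + s) m * thetaEl β (s + m)) = thetaEl β (s + m) := by
  refine ⟨fun x hx => thetaFun_low hx, fun x hx => ?_, ?_⟩
  · simp only [coe_mul_apply, thetaEl_apply]
    rcases lt_or_ge x β with h | h
    · rw [thetaFun_low h, thetaFun_low (show x < β + s by omega),
        thetaFun_low (show x < β by omega)]
    · rw [thetaFun_up h (by omega), thetaFun_down (show β + s + m ≤ x + (s+m) by omega)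
        (show x + (s+m) < β + s + 2*m by omega)]
      rw [show x + (s+m) - m = x + s by omega, thetaFun_down (by omega) (by omega)]
      omega
  · have h1 := thetaEl_sq β s
    have h2 := thetaEl_sq (β + s) m
    calc thetaEl (β + s) m * thetaEl β s *
          (thetaEl β s * thetaEl (β + s) m * thetaEl β (s + m))
        = thetaEl (β + s) m * (thetaEl β s * thetaEl β s) * thetaEl (β + s) m
            * thetaEl β (s + m) := by group
      _ = thetaEl β (s + m) := by rw [h1, mul_one, h2, one_mul]

lemma InKtri_diag {α n : ℕ} (hn : α ≤ n) (r : SInf)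
    (h : ∀ x, x < n → (↑r : Equiv.Perm ℕ) x = x) : InKtri α (r, r, r) :=
  ⟨r, fun x hx => h x (by omega), rfl⟩

lemma InKtri.mul {α : ℕ} {k k' : TriG} (h : InKtri α k) (h' : InKtri α k') :
    InKtri α (k * k') := by
  obtain ⟨r, hr, rfl⟩ := h
  obtain ⟨r', hr', rfl⟩ := h'
  refine ⟨r * r', fun x hx => ?_, rfl⟩
  rw [coe_mul_apply, hr' x hx, hr x hx]

lemma InKtri.inv {α : ℕ} {k : TriG} (h : InKtri α k) : InKtri α k⁻¹ := by
  obtain ⟨r, hr, rfl⟩ := h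
  refine ⟨r⁻¹, fun x hx => ?_, rfl⟩
  have : (↑r⁻¹ : Equiv.Perm ℕ) x = (↑r⁻¹ : Equiv.Perm ℕ) ((↑r : Equiv.Perm ℕ) x) := by
    rw [hr x hx]
  rw [this]
  exact Equiv.symm_apply_apply _ _

/-- Abstract component identity for part 1. -/
lemma comp_eq1 {G : Type*} [Group G] (pi qi a b θs θt : G)
    (hab : a * θs * b = θt) (hpa : a * pi = pi * a) (hqb : b * qi = qi * b) :
    pi * θt * qi = a * (pi * θs * qi) * b := by
  calc pi * θt * qi = (pi * a) * θs * (b * qi) := by rw [← hab]; group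
    _ = (a * pi) * θs * (qi * b) := by rw [hpa, hqb]
    _ = a * (pi * θs * qi) * b := by group

/-- Abstract component identity for part 2. -/
lemma comp_eq2 {G : Type*} [Group G] (k pi r θ r' qi c s s' : G)
    (hs : r * θ = θ * s) (hs' : θ * r' = s' * θ)
    (hrs' : r * s' = s' * r) (hps' : pi * s' = s' * pi) (hsq : s * qi = qi * s) :
    k * pi * r * θ * (r' * qi * c) = k * s' * (pi * θ * qi) * (s * c) := by
  have h1 : r * θ * r' = s' * θ * s := by
    calc r * θ * r' = r * (θ * r') := by group
      _ = r * (s' * θ) := by rw [hs']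
      _ = (r * s') * θ := by group
      _ = (s' * r) * θ := by rw [hrs']
      _ = s' * (r * θ) := by group
      _ = s' * (θ * s) := by rw [hs]
      _ = s' * θ * s := by group
  calc k * pi * r * θ * (r' * qi * c) = k * pi * (r * θ * r') * qi * c := by group
    _ = k * pi * (s' * θ * s) * qi * c := by rw [h1]
    _ = k * (pi * s') * θ * (s * qi) * c := by group
    _ = k * (s' * pi) * θ * (qi * s) * c := by rw [hps', hsq]
    _ = k * s' * (pi * θ * qi) * (s * c) := by group
theorem tri_double_coset_product_well_defined (p q : TriG) (α β γ : ℕ) :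
    (∃ N : ℕ, ∀ j ≥ N, ∃ k₁ k₂ : TriG, InKtri α k₁ ∧ InKtri γ k₂ ∧
        p * ThetaTri β j * q = k₁ * (p * ThetaTri β N * q) * k₂) ∧
    (∀ k₁ h h' k₂ : TriG, InKtri α k₁ → InKtri β h → InKtri β h' → InKtri γ k₂ →
      ∃ N : ℕ, ∀ j ≥ N,
        SameDC α γ ((k₁ * p * h) * ThetaTri β j * (h' * q * k₂)) (p * ThetaTri β j * q)) := by
  obtain ⟨B1, hB1⟩ := supp_bound p.1
  obtain ⟨B2, hB2⟩ := supp_bound p.2.1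
  obtain ⟨B3, hB3⟩ := supp_bound p.2.2
  obtain ⟨B4, hB4⟩ := supp_bound q.1
  obtain ⟨B5, hB5⟩ := supp_bound q.2.1
  obtain ⟨B6, hB6⟩ := supp_bound q.2.2
  constructor
  · -- Part 1
    set N := α + γ + B1 + B2 + B3 + B4 + B5 + B6 with hN
    have step : ∀ s m : ℕ, N ≤ s → s ≤ m → ∃ k₁ k₂ : TriG, InKtri α k₁ ∧ InKtri γ k₂ ∧
        p * ThetaTri β (s + m) * q = k₁ * (p * ThetaTri β s * q) * k₂ := by
      intro s m hNs hsm
      obtain ⟨ha, hb, hab⟩ := theta_decomp β s m hsm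
      set a := thetaEl (β + s) m with ha_def
      set b := thetaEl β s * thetaEl (β + s) m * thetaEl β (s + m) with hb_def
      have hpa1 : a * p.1 = p.1 * a := commute_of (β + s) a p.1 ha fun x hx => hB1 x (by omega)
      have hpa2 : a * p.2.1 = p.2.1 * a :=
        commute_of (β + s) a p.2.1 ha fun x hx => hB2 x (by omega)
      have hpa3 : a * p.2.2 = p.2.2 * a :=
        commute_of (β + s) a p.2.2 ha fun x hx => hB3 x (by omega)
      have hqb1 : b * q.1 = q.1 * b := commute_of (β + s) b q.1 hb fun x hx => hB4 x (by omega)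
      have hqb2 : b * q.2.1 = q.2.1 * b :=
        commute_of (β + s) b q.2.1 hb fun x hx => hB5 x (by omega)
      have hqb3 : b * q.2.2 = q.2.2 * b :=
        commute_of (β + s) b q.2.2 hb fun x hx => hB6 x (by omega)
      refine ⟨(a, a, a), (b, b, b), InKtri_diag (by omega) a ha, InKtri_diag (by omega) b hb, ?_⟩
      refine Prod.ext ?_ (Prod.ext ?_ ?_)
      · simp only [Prod.fst_mul, ThetaTri]
        exact comp_eq1 p.1 q.1 a b _ _ hab hpa1 hqb1
      · simp only [Prod.snd_mul, Prod.fst_mul, ThetaTri]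
        exact comp_eq1 p.2.1 q.2.1 a b _ _ hab hpa2 hqb2
      · simp only [Prod.snd_mul, ThetaTri]
        exact comp_eq1 p.2.2 q.2.2 a b _ _ hab hpa3 hqb3
    refine ⟨N, fun j hj => ?_⟩
    obtain ⟨A, B, hA, hB, e1⟩ := step j j hj le_rfl
    obtain ⟨A', B', hA', hB', e2⟩ := step N (j + j - N) le_rfl (by omega)
    rw [show N + (j + j - N) = j + j by omega] at e2
    refine ⟨A⁻¹ * A', B' * B⁻¹, hA.inv.mul hA', hB'.mul hB.inv, ?_⟩
    have e3 : p * ThetaTri β j * q = A⁻¹ * (p * ThetaTri β (j + j) * q) * B⁻¹ := by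
      rw [e1]; group
    rw [e3, e2]; group
  · -- Part 2
    intro k₁ h h' k₂ hk₁ hh hh' hk₂
    obtain ⟨k, hk, rfl⟩ := hk₁
    obtain ⟨r, hr, rfl⟩ := hh
    obtain ⟨r', hr', rfl⟩ := hh'
    obtain ⟨c, hc, rfl⟩ := hk₂
    obtain ⟨Br, hBr⟩ := supp_bound r
    obtain ⟨Br', hBr'⟩ := supp_bound r'
    refine ⟨α + γ + B1 + B2 + B3 + B4 + B5 + B6 + Br + Br', fun j hj => ?_⟩
    set θ := thetaEl β j with hθ_def
    set s := θ * r * θ with hs_def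
    set s' := θ * r' * θ with hs'_def
    have hθθ : θ * θ = 1 := thetaEl_sq β j
    have hsfix : ∀ x, x < β + j → (↑s : Equiv.Perm ℕ) x = x :=
      conj_fix β j r (fun x hx => hr x hx) (fun x hx => hBr x (by omega))
    have hs'fix : ∀ x, x < β + j → (↑s' : Equiv.Perm ℕ) x = x :=
      conj_fix β j r' (fun x hx => hr' x hx) (fun x hx => hBr' x (by omega))
    have hs : r * θ = θ * s := by
      have : θ * s = (θ * θ) * (r * θ) := by rw [hs_def]; group
      rw [this, hθθ, one_mul]
    have hs' : θ * r' = s' * θ := by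
      have : s' * θ = (θ * r') * (θ * θ) := by rw [hs'_def]; group
      rw [this, hθθ, mul_one]
    have hrs' : r * s' = s' * r :=
      (commute_of (β + j) s' r hs'fix fun x hx => hBr x (by omega)).symm
    have hps1 : p.1 * s' = s' * p.1 :=
      (commute_of (β + j) s' p.1 hs'fix fun x hx => hB1 x (by omega)).symm
    have hps2 : p.2.1 * s' = s' * p.2.1 :=
      (commute_of (β + j) s' p.2.1 hs'fix fun x hx => hB2 x (by omega)).symm
    have hps3 : p.2.2 * s' = s' * p.2.2 :=
      (commute_of (β + j) s' p.2.2 hs'fix fun x hx => hB3 x (by omega)).symm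
    have hsq1 : s * q.1 = q.1 * s :=
      commute_of (β + j) s q.1 hsfix fun x hx => hB4 x (by omega)
    have hsq2 : s * q.2.1 = q.2.1 * s :=
      commute_of (β + j) s q.2.1 hsfix fun x hx => hB5 x (by omega)
    have hsq3 : s * q.2.2 = q.2.2 * s :=
      commute_of (β + j) s q.2.2 hsfix fun x hx => hB6 x (by omega)
    refine ⟨(k, k, k) * (s', s', s'), (s, s, s) * (c, c, c),
      InKtri.mul ⟨k, hk, rfl⟩ (InKtri_diag (by omega) s' hs'fix),
      InKtri.mul (InKtri_diag (by omega) s hsfix) ⟨c, hc, rfl⟩, ?_⟩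
    refine Prod.ext ?_ (Prod.ext ?_ ?_)
    · simp only [Prod.fst_mul, ThetaTri]
      exact comp_eq2 k p.1 r θ r' q.1 c s s' hs hs' hrs' hps1 hsq1
    · simp only [Prod.snd_mul, Prod.fst_mul, ThetaTri]
      exact comp_eq2 k p.2.1 r θ r' q.2.1 c s s' hs hs' hrs' hps2 hsq2
    · simp only [Prod.snd_mul, ThetaTri]
      exact comp_eq2 k p.2.2 r θ r' q.2.2 c s s' hs hs' hrs' hps3 hsq3
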